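/- arXiv:2311.04555 — 5 statements merged into one kernel-verified Lean document; each statement's English description precedes it below -/
import Mathlib

section
/- For every f ∈ 𝓑 the function f̂ again belongs to 𝓑; that is, for every i ∈ I the function x ↦ f̂(x,i) is well defined (the integrals are finite), continuous on [0,∞), and ‖f̂‖ := max_{i∈I} sup_{x≥0} |f̂(x,i)|/(1+x) is finite. -/
open MeasureTheory Set

noncomputable section

/-- Membership in `𝓑`: `x ↦ f (x, i)` is continuous on `[0,∞)` for every `i ∈ I`, and
`‖f‖ := max_{i∈I} sup_{x ≥ 0} |f (x, i)| / (1 + x)` is finite (formalized as boundedness of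
the corresponding family over `[0,∞) × I`). -/
def memB (I : Type) [Fintype I] (f : ℝ × I → ℝ) : Prop :=
  (∀ i : I, ContinuousOn (fun x : ℝ => f (x, i)) (Set.Ici 0)) ∧
  BddAbove ((fun p : ℝ × I => |f p| / (1 + p.1)) '' (Set.Ici (0 : ℝ) ×ˢ (Set.univ : Set I)))

/-- The function `f̂(x,i) := Σ_{j≠i} (λ_{ij}/λ_i) ∫ [ f(x+y,j)·1_{−y ≤ x}
+ (φ(x+y) + f(0,j))·1_{−y > x} ] F_{ij}(dy)`, where `λ_i = Σ_{j≠i} λ_{ij}` and the measures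
`F_{ij}` are concentrated on `(−∞,0]`. -/
noncomputable def fhat (I : Type) [Fintype I] [DecidableEq I] (φ : ℝ) (lam : I → I → ℝ)
    (F : I → I → Measure ℝ) (f : ℝ × I → ℝ) (x : ℝ) (i : I) : ℝ :=
  ∑ j ∈ Finset.univ.erase i,
    (lam i j / ∑ k ∈ Finset.univ.erase i, lam i k) *
      ∫ y : ℝ, (if -y ≤ x then f (x + y, j) else φ * (x + y) + f (0, j)) ∂(F i j)

def gInt {I : Type} (φ : ℝ) (f : ℝ × I → ℝ) (j : I) (x y : ℝ) : ℝ :=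
  if -y ≤ x then f (x + y, j) else φ * (x + y) + f (0, j)

lemma gInt_eq {I : Type} (φ : ℝ) (f : ℝ × I → ℝ) (j : I) (x : ℝ) :
    (fun y => gInt φ f j x y) =
      fun y => if -y ≤ x then f (max (x + y) 0, j) else φ * (x + y) + f (0, j) := by
  funext y
  unfold gInt
  split_ifs with h
  · rw [max_eq_left (by linarith)]
  · rfl

lemma gInt_eq' {I : Type} (φ : ℝ) (f : ℝ × I → ℝ) (j : I) (y : ℝ) :
    (fun x => gInt φ f j x y) =
      fun x => if -y ≤ x then f (max (x + y) 0, j) else φ * (x + y) + f (0, j) := by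
  funext x
  unfold gInt
  split_ifs with h
  · rw [max_eq_left (by linarith)]
  · rfl

lemma gInt_cont_y {I : Type} {φ : ℝ} {f : ℝ × I → ℝ} {j : I}
    (hfc : ContinuousOn (fun t : ℝ => f (t, j)) (Ici 0)) (x : ℝ) :
    Continuous (fun y => gInt φ f j x y) := by
  rw [gInt_eq]
  have h1 : Continuous fun y : ℝ => f (max (x + y) 0, j) := by
    have : Continuous fun y : ℝ => max (x + y) 0 := by continuity
    exact hfc.comp_continuous this fun y => mem_Ici.2 (le_max_right _ _)
  refine Continuous.if_le h1 (by continuity) continuous_neg continuous_const ?_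
  intro y hy
  have hxy : x + y = 0 := by linarith [hy]
  rw [hxy]
  simp

lemma gInt_cont_x {I : Type} {φ : ℝ} {f : ℝ × I → ℝ} {j : I}
    (hfc : ContinuousOn (fun t : ℝ => f (t, j)) (Ici 0)) (y : ℝ) :
    Continuous (fun x => gInt φ f j x y) := by
  rw [gInt_eq']
  have h1 : Continuous fun x : ℝ => f (max (x + y) 0, j) := by
    have : Continuous fun x : ℝ => max (x + y) 0 := by continuity
    exact hfc.comp_continuous this fun x => mem_Ici.2 (le_max_right _ _)
  refine Continuous.if_le h1 (by continuity) continuous_const continuous_id ?_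
  intro x hx
  have hxy : x + y = 0 := by
    linarith
  rw [hxy]
  simp


/-- For every `f ∈ 𝓑`, the function `f̂` again belongs to `𝓑`: for every `i ∈ I` the function
`x ↦ f̂(x,i)` is well defined (the integrals are finite), continuous on `[0,∞)`, and
`‖f̂‖ := max_{i∈I} sup_{x≥0} |f̂(x,i)|/(1+x)` is finite. -/
theorem fhat_mem_B (I : Type) [Fintype I] [Nonempty I] [DecidableEq I]
    (φ : ℝ) (hφ : 1 < φ)
    (lam : I → I → ℝ) (hlam : ∀ i j : I, i ≠ j → 0 ≤ lam i j)
    (hlampos : ∀ i : I, 0 < ∑ k ∈ Finset.univ.erase i, lam i k)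
    (F : I → I → Measure ℝ)
    (hFprob : ∀ i j : I, i ≠ j → IsProbabilityMeasure (F i j))
    (hFsupp : ∀ i j : I, i ≠ j → F i j (Set.Ioi 0) = 0)
    (hFmom : ∀ i j : I, i ≠ j → Integrable (fun y : ℝ => |y|) (F i j))
    (f : ℝ × I → ℝ) (hf : memB I f) :
    (∀ i j : I, i ≠ j → ∀ x : ℝ, 0 ≤ x →
      Integrable (fun y : ℝ => if -y ≤ x then f (x + y, j) else φ * (x + y) + f (0, j))
        (F i j)) ∧
    memB I (fun p : ℝ × I => fhat I φ lam F f p.1 p.2) := by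
  obtain ⟨hfc, C, hC⟩ := hf
  -- basic bounds from membership of f in 𝓑
  have hCf : ∀ x : ℝ, 0 ≤ x → ∀ j : I, |f (x, j)| ≤ C * (1 + x) := by
    intro x hx j
    have h1x : (0:ℝ) < 1 + x := by linarith
    have h1 : |f (x, j)| / (1 + x) ≤ C := hC ⟨(x, j), ⟨hx, mem_univ j⟩, rfl⟩
    rw [div_le_iff₀ h1x] at h1
    linarith
  have hC0 : (0:ℝ) ≤ C := by
    obtain ⟨j⟩ := ‹Nonempty I›
    have := hCf 0 le_rfl j
    have := abs_nonneg (f (0, j))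
    linarith
  have hφ0 : (0:ℝ) < φ := by linarith
  -- a.e. nonpositivity
  have hae : ∀ i j : I, i ≠ j → ∀ᵐ y ∂(F i j), y ≤ 0 := by
    intro i j hij
    rw [ae_iff]
    refine measure_mono_null ?_ (hFsupp i j hij)
    intro y hy
    exact not_le.1 hy
  -- pointwise bound
  have hbd : ∀ (j : I) (x x' : ℝ), 0 ≤ x → x ≤ x' → ∀ y : ℝ, y ≤ 0 →
      ‖gInt φ f j x y‖ ≤ (C * (1 + x') + |f (0, j)|) + φ * |y| := by
    intro j x x' hx hxx' y hy
    rw [Real.norm_eq_abs]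
    unfold gInt
    have habs0 : (0:ℝ) ≤ |f (0, j)| := abs_nonneg _
    have habsy : (0:ℝ) ≤ |y| := abs_nonneg _
    split_ifs with h
    · have h0 : 0 ≤ x + y := by linarith
      have h1 := hCf (x + y) h0 j
      have h2 : C * (1 + (x + y)) ≤ C * (1 + x') :=
        mul_le_mul_of_nonneg_left (by linarith) hC0
      nlinarith [mul_nonneg hφ0.le habsy]
    · have hxy : x + y < 0 := by linarith
      have hxyy : |x + y| ≤ |y| := by
        rw [abs_of_neg hxy, abs_of_nonpos hy]; linarith
      have h1 : |φ * (x + y) + f (0, j)| ≤ φ * |x + y| + |f (0, j)| := by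
        calc |φ * (x + y) + f (0, j)| ≤ |φ * (x + y)| + |f (0, j)| := abs_add_le _ _
          _ = φ * |x + y| + |f (0, j)| := by rw [abs_mul, abs_of_pos hφ0]
      have h2 : φ * |x + y| ≤ φ * |y| := mul_le_mul_of_nonneg_left hxyy hφ0.le
      have h3 : (0:ℝ) ≤ C * (1 + x') := mul_nonneg hC0 (by linarith)
      linarith
  -- integrable dominating function
  have hIbd : ∀ i j : I, i ≠ j → ∀ B : ℝ,
      Integrable (fun y : ℝ => B + φ * |y|) (F i j) := by
    intro i j hij B
    haveI := hFprob i j hij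
    exact (integrable_const B).add ((hFmom i j hij).const_mul φ)
  -- integrability of the integrand
  have hInt : ∀ i j : I, i ≠ j → ∀ x : ℝ, 0 ≤ x →
      Integrable (fun y => gInt φ f j x y) (F i j) := by
    intro i j hij x hx
    refine (hIbd i j hij (C * (1 + x) + |f (0, j)|)).mono'
      ((gInt_cont_y (hfc j) x).aestronglyMeasurable) ?_
    exact (hae i j hij).mono fun y hy => hbd j x x hx le_rfl y hy
  -- bound on the integral
  have hIntBd : ∀ i j : I, i ≠ j → ∀ x : ℝ, 0 ≤ x →
      |∫ y, gInt φ f j x y ∂(F i j)| ≤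
        (C * (1 + x) + |f (0, j)|) + φ * ∫ y, |y| ∂(F i j) := by
    intro i j hij x hx
    haveI := hFprob i j hij
    have h1 := norm_integral_le_of_norm_le (hIbd i j hij (C * (1 + x) + |f (0, j)|))
      ((hae i j hij).mono fun y hy => hbd j x x hx le_rfl y hy)
    rw [Real.norm_eq_abs] at h1
    have h2 : ∫ y, ((C * (1 + x) + |f (0, j)|) + φ * |y|) ∂(F i j)
        = (C * (1 + x) + |f (0, j)|) + φ * ∫ y, |y| ∂(F i j) := by
      rw [integral_add (integrable_const _) ((hFmom i j hij).const_mul φ),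
        integral_const, integral_const_mul]
      simp
    rw [h2] at h1
    exact h1
  -- continuity of the integral in x
  have hcontInt : ∀ i j : I, i ≠ j →
      ContinuousOn (fun x => ∫ y, gInt φ f j x y ∂(F i j)) (Ici 0) := by
    intro i j hij x₀ hx₀
    refine continuousWithinAt_of_dominated
      (bound := fun y => (C * (1 + (x₀ + 1)) + |f (0, j)|) + φ * |y|) ?_ ?_ ?_ ?_
    · exact Filter.Eventually.of_forall fun x =>
        (gInt_cont_y (hfc j) x).aestronglyMeasurable
    · have hev : ∀ᶠ x in nhdsWithin x₀ (Ici 0), x ∈ Ici (0:ℝ) ∩ Iio (x₀ + 1) :=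
        Filter.inter_mem self_mem_nhdsWithin
          (nhdsWithin_le_nhds (Iio_mem_nhds (by linarith)))
      filter_upwards [hev] with x hx
      exact (hae i j hij).mono fun y hy => hbd j x (x₀ + 1) hx.1 hx.2.le y hy
    · exact hIbd i j hij _
    · exact Filter.Eventually.of_forall fun y =>
        (gInt_cont_x (hfc j) y).continuousWithinAt
  refine ⟨fun i j hij x hx => hInt i j hij x hx, ?_, ?_⟩
  · -- continuity of fhat
    intro i
    have : ContinuousOn (fun x : ℝ => fhat I φ lam F f x i) (Ici 0) := by
      unfold fhat
      refine continuousOn_finset_sum _ fun j hj => ?_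
      have hij : i ≠ j := (Finset.ne_of_mem_erase hj).symm
      exact continuousOn_const.mul (hcontInt i j hij)
    exact this
  · -- boundedness
    set M : I → I → ℝ := fun a b => if a = b then 0 else ∫ y, |y| ∂(F a b) with hM
    have hMnn : ∀ a b : I, 0 ≤ M a b := by
      intro a b
      by_cases h : a = b
      · simp [hM, h]
      · simp only [hM, if_neg h]
        exact integral_nonneg fun y => abs_nonneg y
    set D : ℝ := ∑ a : I, ∑ b : I, (2 * C + φ * M a b) with hD
    have htermnn : ∀ a b : I, (0:ℝ) ≤ 2 * C + φ * M a b := fun a b =>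
      add_nonneg (by linarith) (mul_nonneg hφ0.le (hMnn a b))
    refine ⟨D, ?_⟩
    rintro z ⟨⟨x, i⟩, ⟨hx, -⟩, rfl⟩
    simp only
    have hx0 : (0:ℝ) ≤ x := hx
    have h1x : (0:ℝ) < 1 + x := by linarith
    rw [div_le_iff₀ h1x]
    calc |fhat I φ lam F f x i|
        ≤ ∑ j ∈ Finset.univ.erase i,
            |(lam i j / ∑ k ∈ Finset.univ.erase i, lam i k) *
              ∫ y, gInt φ f j x y ∂(F i j)| := by
          unfold fhat
          exact Finset.abs_sum_le_sum_abs _ _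
      _ ≤ ∑ j ∈ Finset.univ.erase i, (2 * C + φ * M i j) * (1 + x) := by
          refine Finset.sum_le_sum fun j hj => ?_
          have hij : i ≠ j := (Finset.ne_of_mem_erase hj).symm
          have hc0 : 0 ≤ lam i j / ∑ k ∈ Finset.univ.erase i, lam i k :=
            div_nonneg (hlam i j hij) (hlampos i).le
          have hc1 : lam i j / ∑ k ∈ Finset.univ.erase i, lam i k ≤ 1 := by
            rw [div_le_one (hlampos i)]
            exact Finset.single_le_sum (fun k hk => hlam i k (Finset.ne_of_mem_erase hk).symm) hj
          have hIb := hIntBd i j hij x hx0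
          have hMij : M i j = ∫ y, |y| ∂(F i j) := if_neg hij
          have hf0 : |f (0, j)| ≤ C := by
            have := hCf 0 le_rfl j; linarith
          have hintnn : (0:ℝ) ≤ |∫ y, gInt φ f j x y ∂(F i j)| := abs_nonneg _
          rw [abs_mul, abs_of_nonneg hc0]
          calc (lam i j / ∑ k ∈ Finset.univ.erase i, lam i k) *
                |∫ y, gInt φ f j x y ∂(F i j)|
              ≤ 1 * |∫ y, gInt φ f j x y ∂(F i j)| :=
                mul_le_mul_of_nonneg_right hc1 hintnn
            _ = |∫ y, gInt φ f j x y ∂(F i j)| := one_mul _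
            _ ≤ (C * (1 + x) + |f (0, j)|) + φ * ∫ y, |y| ∂(F i j) := hIb
            _ ≤ (2 * C + φ * M i j) * (1 + x) := by
                rw [hMij]
                have hMnn' : (0:ℝ) ≤ ∫ y, |y| ∂(F i j) :=
                  integral_nonneg fun y => abs_nonneg y
                nlinarith [mul_nonneg (mul_nonneg hφ0.le hMnn') hx0, mul_nonneg hC0 hx0]
      _ = (∑ j ∈ Finset.univ.erase i, (2 * C + φ * M i j)) * (1 + x) :=
          (Finset.sum_mul _ _ _).symm
      _ ≤ D * (1 + x) := by
          refine mul_le_mul_of_nonneg_right ?_ h1x.le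
          calc ∑ j ∈ Finset.univ.erase i, (2 * C + φ * M i j)
              ≤ ∑ j : I, (2 * C + φ * M i j) :=
                Finset.sum_le_sum_of_subset_of_nonneg (Finset.erase_subset _ _)
                  (fun b _ _ => htermnn i b)
            _ ≤ D := Finset.single_le_sum
                (f := fun a => ∑ b : I, (2 * C + φ * M a b))
                (fun a _ => Finset.sum_nonneg fun b _ => htermnn a b) (Finset.mem_univ i)
end
end

section
/- Suppose f ∈ 𝓑 is such that for every j ∈ I the function x ↦ f(x,j) is concave on [0,∞), nondecreasing, continuously differentiable on (0,∞), its right derivative at 0 is at most φ, and the limit L_j := lim_{x→∞} ∂f/∂x (x,j) exists and lies in [0,1]. Then for every i ∈ I the function x ↦ f̂(x,i) is concave on [0,∞), its right derivative at 0 is at most φ, and the limit as x → ∞ of its right derivative exists and lies in [0,1]. -/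
open MeasureTheory Set Filter

noncomputable section

namespace FhatAux

/-- Extension of `u` to the left of `0` by the line of slope `φ`. -/
def G (φ : ℝ) (u : ℝ → ℝ) (t : ℝ) : ℝ := if 0 ≤ t then u t else φ * t + u 0

/-- One-sided (right) derivative function of `G φ u`. -/
def D (φ : ℝ) (u : ℝ → ℝ) (d : ℝ) (t : ℝ) : ℝ :=
  if t < 0 then φ else if t = 0 then d else deriv u t

variable {φ d : ℝ} {u : ℝ → ℝ}

theorem G_of_nonneg (hu : 0 ≤ t) : G φ u t = u t := if_pos hu

theorem G_of_nonpos (ht : t ≤ 0) : G φ u t = φ * t + u 0 := by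
  rcases lt_or_eq_of_le ht with h | h
  · exact if_neg (not_le.mpr h)
  · subst h; simp [G]

theorem G_cont (hu : ContinuousOn u (Ici 0)) : Continuous (G φ u) := by
  have hmax : Continuous fun t : ℝ => u (max t 0) :=
    hu.comp_continuous (continuous_id.max continuous_const) fun t => Set.mem_Ici.mpr (le_max_right _ _)
  have h2 : Continuous fun t : ℝ =>
      if (0 : ℝ) ≤ t then u (max t 0) else φ * t + u 0 := by
    apply Continuous.if_le hmax (by continuity) continuous_const continuous_id
    intro t ht
    subst ht
    simp
  exact h2.congr fun t => by
    by_cases h : (0:ℝ) ≤ t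
    · simp [G, h, max_eq_left h]
    · simp [G, h]

theorem G_monotone (hφ : 0 < φ) (hm : MonotoneOn u (Ici 0)) : Monotone (G φ u) := by
  intro s t hst
  by_cases hs : 0 ≤ s
  · rw [G_of_nonneg hs, G_of_nonneg (hs.trans hst)]
    exact hm hs (hs.trans hst) hst
  · push_neg at hs
    by_cases ht : t ≤ 0
    · rw [G_of_nonpos hs.le, G_of_nonpos ht]
      have := mul_le_mul_of_nonneg_left hst hφ.le
      linarith
    · push_neg at ht
      rw [G_of_nonpos hs.le, G_of_nonneg ht.le]
      have h1 : φ * s + u 0 ≤ u 0 := by nlinarith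
      exact h1.trans (hm Set.self_mem_Ici ht.le ht.le)


/-- For a concave function on `univ`, slopes over later intervals are smaller. -/
theorem concave_secant_le {g : ℝ → ℝ} (hg : ConcaveOn ℝ univ g) {a b c e : ℝ}
    (hab : a < b) (hbc : b ≤ c) (hce : c < e) :
    (g e - g c) / (e - c) ≤ (g b - g a) / (b - a) := by
  have hng : ConvexOn ℝ univ (-g) := hg.neg
  have h1 := hng.secant_mono (a := c) (x := a) (y := e) trivial trivial trivial
    (by linarith) (by linarith) (by linarith)
  have h2 := hng.secant_mono (a := a) (x := b) (y := c) trivial trivial trivial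
    (by linarith) (by linarith) hbc
  simp only [Pi.neg_apply] at h1 h2
  have e1 : (-g a - -g c) / (a - c) = -((g c - g a) / (c - a)) := by
    rw [show (-g a - -g c) = g c - g a by ring, show a - c = -(c - a) by ring, div_neg]
  have e2 : (-g e - -g c) / (e - c) = -((g e - g c) / (e - c)) := by ring_nf
  have e3 : (-g b - -g a) / (b - a) = -((g b - g a) / (b - a)) := by ring_nf
  have e4 : (-g c - -g a) / (c - a) = -((g c - g a) / (c - a)) := by ring_nf
  rw [e1, e2] at h1
  rw [e3, e4] at h2
  linarith

/-- Bound on the slopes of `u` at `0` from the right derivative. -/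
theorem u_sub_le (hcv : ConcaveOn ℝ (Ici 0) u) (hd : HasDerivWithinAt u d (Ici 0) 0)
    (hdφ : d ≤ φ) : ∀ t : ℝ, 0 ≤ t → u t - u 0 ≤ φ * t := by
  intro t ht
  rcases eq_or_lt_of_le ht with h | h
  · simp [← h]
  have H := hasDerivWithinAt_iff_tendsto_slope.mp hd
  rw [Set.Ici_sdiff_left] at H
  have hslope : (u t - u 0) / t ≤ d := by
    apply ge_of_tendsto H
    filter_upwards [Ioo_mem_nhdsGT_of_mem (α := ℝ) ⟨le_refl 0, h⟩] with s hs
    have := (hcv.neg.secant_mono (a := 0) (x := s) (y := t) self_mem_Ici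
      (le_of_lt hs.1 : (0:ℝ) ≤ s) ht (ne_of_gt hs.1) (ne_of_gt h) hs.2.le)
    simp only [Pi.neg_apply, slope_def_field] at this ⊢
    have hs0 : (0:ℝ) < s := hs.1
    rw [div_le_div_iff₀ (by linarith) (by linarith)] at *
    nlinarith [this]
  have ht' : (0:ℝ) < t := h
  rw [div_le_iff₀ ht'] at hslope
  nlinarith

/-- The extended function is concave on all of `ℝ`. -/
theorem G_concave (hφ : 0 < φ) (hcv : ConcaveOn ℝ (Ici 0) u)
    (hd : HasDerivWithinAt u d (Ici 0) 0) (hdφ : d ≤ φ) :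
    ConcaveOn ℝ univ (G φ u) := by
  have key := u_sub_le (φ := φ) hcv hd hdφ
  apply concaveOn_of_slope_anti_adjacent convex_univ
  intro x y z _ _ hxy hyz
  by_cases hz : z ≤ 0
  · rw [G_of_nonpos hz, G_of_nonpos (hyz.le.trans hz), G_of_nonpos ((hxy.trans hyz).le.trans hz)]
    rw [div_le_div_iff₀ (by linarith) (by linarith)]
    nlinarith
  push_neg at hz
  by_cases hy : y ≤ 0
  · rw [G_of_nonneg hz.le, G_of_nonpos hy, G_of_nonpos (hxy.le.trans hy)]
    rw [div_le_div_iff₀ (by linarith) (by linarith)]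
    have := key z hz.le
    nlinarith
  push_neg at hy
  by_cases hx : 0 ≤ x
  · rw [G_of_nonneg hz.le, G_of_nonneg hy.le, G_of_nonneg hx]
    exact hcv.slope_anti_adjacent hx (hx.trans (hxy.trans hyz).le) hxy hyz
  push_neg at hx
  · rw [G_of_nonneg hz.le, G_of_nonneg hy.le, G_of_nonpos hx.le]
    have h1 : (u z - u y) / (z - y) ≤ (u y - u 0) / (y - 0) :=
      hcv.slope_anti_adjacent self_mem_Ici (hy.le.trans hyz.le) hy hyz
    have h2 : (u y - u 0) / (y - 0) ≤ (u y - (φ * x + u 0)) / (y - x) := by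
      rw [div_le_div_iff₀ (by linarith) (by linarith)]
      have := key y hy.le
      nlinarith
    linarith

/-- Slopes of `G` lie in `[0, φ]`. -/
theorem slope_G_mem (hφ : 0 < φ) (hm : MonotoneOn u (Ici 0)) (hcv : ConcaveOn ℝ (Ici 0) u)
    (hd : HasDerivWithinAt u d (Ici 0) 0) (hdφ : d ≤ φ) {s t : ℝ} (hst : s < t) :
    0 ≤ (G φ u t - G φ u s) / (t - s) ∧ (G φ u t - G φ u s) / (t - s) ≤ φ := by
  constructor
  · exact div_nonneg (sub_nonneg.mpr (G_monotone hφ hm hst.le)) (by linarith)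
  · have h := concave_secant_le (G_concave hφ hcv hd hdφ)
      (a := min s 0 - 1) (b := min s 0) (c := s) (e := t)
      (by linarith) (min_le_left _ _) hst
    have hb : min s 0 ≤ 0 := min_le_right _ _
    rw [G_of_nonpos hb, G_of_nonpos (by linarith : min s 0 - 1 ≤ 0)] at h
    have : (φ * min s 0 + u 0 - (φ * (min s 0 - 1) + u 0)) / (min s 0 - (min s 0 - 1)) = φ := by
      ring_nf
    rwa [this] at h

/-- `G` has right derivative `D` everywhere. -/
theorem hasDerivWithinAt_G (hu : ContinuousOn u (Ici 0)) (hC1 : ContDiffOn ℝ 1 u (Ioi 0))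
    (hd : HasDerivWithinAt u d (Ici 0) 0) (x : ℝ) :
    HasDerivWithinAt (G φ u) (D φ u d x) (Ici x) x := by
  rcases lt_trichotomy x 0 with hx | hx | hx
  · -- x < 0 : locally linear
    have heq : (fun t : ℝ => φ * t + u 0) =ᶠ[nhds x] G φ u := by
      filter_upwards [isOpen_Iio.mem_nhds hx] with t ht
      rw [G_of_nonpos (le_of_lt ht)]
    have hlin : HasDerivAt (fun t : ℝ => φ * t + u 0) φ x := by
      simpa using ((hasDerivAt_id x).const_mul φ).add_const (u 0)
    have : HasDerivAt (G φ u) φ x := hlin.congr_of_eventuallyEq heq.symm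
    simpa [D, hx] using this.hasDerivWithinAt
  · -- x = 0 : given right derivative
    subst hx
    have : HasDerivWithinAt (G φ u) d (Ici 0) 0 :=
      hd.congr (fun t ht => G_of_nonneg ht) (G_of_nonneg le_rfl)
    simpa [D] using this
  · -- x > 0 : u is C¹ there
    have hdiff : DifferentiableAt ℝ u x :=
      ((hC1.differentiableOn one_ne_zero) x hx).differentiableAt (isOpen_Ioi.mem_nhds hx)
    have heq : u =ᶠ[nhds x] G φ u := by
      filter_upwards [isOpen_Ioi.mem_nhds hx] with t ht
      rw [G_of_nonneg (le_of_lt ht)]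
    have : HasDerivAt (G φ u) (deriv u x) x := hdiff.hasDerivAt.congr_of_eventuallyEq heq.symm
    simpa [D, not_lt.mpr hx.le, ne_of_gt hx] using this.hasDerivWithinAt

/-- The right derivatives lie in `[0, φ]`. -/
theorem D_mem (hφ : 0 < φ) (hu : ContinuousOn u (Ici 0)) (hm : MonotoneOn u (Ici 0))
    (hcv : ConcaveOn ℝ (Ici 0) u) (hC1 : ContDiffOn ℝ 1 u (Ioi 0))
    (hd : HasDerivWithinAt u d (Ici 0) 0) (hdφ : d ≤ φ) (x : ℝ) :
    0 ≤ D φ u d x ∧ D φ u d x ≤ φ := by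
  have H := hasDerivWithinAt_iff_tendsto_slope.mp (hasDerivWithinAt_G hu hC1 hd x (φ := φ))
  rw [Set.Ici_sdiff_left] at H
  constructor
  · apply ge_of_tendsto H
    filter_upwards [self_mem_nhdsWithin] with t ht
    rw [slope_def_field]
    exact (slope_G_mem hφ hm hcv hd hdφ ht).1
  · apply le_of_tendsto H
    filter_upwards [self_mem_nhdsWithin] with t ht
    rw [slope_def_field]
    exact (slope_G_mem hφ hm hcv hd hdφ ht).2

section Measure

variable {μ : Measure ℝ} [IsProbabilityMeasure μ]

theorem ae_nonpos (hsupp : μ (Ioi 0) = 0) : ∀ᵐ y ∂μ, y ≤ (0:ℝ) := by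
  have : μ (Iic (0:ℝ))ᶜ = 0 := by rwa [compl_Iic]
  exact mem_ae_iff.mpr this

theorem D_meas : Measurable (D φ u d) := by
  unfold D
  exact Measurable.ite measurableSet_Iio measurable_const
    (Measurable.ite (measurableSet_eq) measurable_const (measurable_deriv u))

theorem D_integrable (hφ : 0 < φ) (hu : ContinuousOn u (Ici 0)) (hm : MonotoneOn u (Ici 0))
    (hcv : ConcaveOn ℝ (Ici 0) u) (hC1 : ContDiffOn ℝ 1 u (Ioi 0))
    (hd : HasDerivWithinAt u d (Ici 0) 0) (hdφ : d ≤ φ) (x : ℝ) :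
    Integrable (fun y => D φ u d (x + y)) μ := by
  apply Integrable.mono' (integrable_const φ)
  · exact ((D_meas (φ := φ) (u := u) (d := d)).comp (measurable_id.const_add x)).aestronglyMeasurable
  · filter_upwards with y
    have h := D_mem hφ hu hm hcv hC1 hd hdφ (x + y)
    rw [Real.norm_eq_abs, abs_of_nonneg h.1]
    exact h.2

theorem G_integrable (hφ : 0 < φ) (hu : ContinuousOn u (Ici 0)) (hsupp : μ (Ioi 0) = 0)
    (hmom : Integrable (fun y : ℝ => |y|) μ) {C : ℝ} (hC : ∀ t : ℝ, 0 ≤ t → |u t| ≤ C * (1 + t))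
    (x : ℝ) : Integrable (fun y => G φ u (x + y)) μ := by
  have hC0 : 0 ≤ C := by
    have := hC 0 le_rfl
    have h0 : (0:ℝ) ≤ |u 0| := abs_nonneg _
    nlinarith
  apply Integrable.mono' (g := fun y => (C * (1 + |x|) + φ * |x| + |u 0|) + φ * |y|)
    ((integrable_const _).add (hmom.const_mul φ))
  · exact ((G_cont hu).comp (continuous_const.add continuous_id)).aestronglyMeasurable
  · filter_upwards [ae_nonpos hsupp] with y hy
    rw [Real.norm_eq_abs]
    by_cases h : 0 ≤ x + y
    · rw [G_of_nonneg h]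
      have h1 := hC (x + y) h
      have h2 : C * (1 + (x + y)) ≤ C * (1 + |x|) := by
        apply mul_le_mul_of_nonneg_left _ hC0
        have : x ≤ |x| := le_abs_self x
        linarith
      have h3 : 0 ≤ φ * |x| := by positivity
      have h4 : 0 ≤ φ * |y| := by positivity
      have h5 : 0 ≤ |u 0| := abs_nonneg _
      linarith
    · push_neg at h
      rw [G_of_nonpos h.le]
      have h1 : |φ * (x + y) + u 0| ≤ |φ * (x + y)| + |u 0| := abs_add_le _ _
      have h2 : |φ * (x + y)| = φ * |x + y| := by
        rw [abs_mul, abs_of_pos hφ]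
      have h3 : |x + y| ≤ |x| + |y| := abs_add_le _ _
      have h4 : φ * |x + y| ≤ φ * (|x| + |y|) := mul_le_mul_of_nonneg_left h3 hφ.le
      have h5 : 0 ≤ C * (1 + |x|) := by positivity
      nlinarith

end Measure

section Deriv

variable {μ : Measure ℝ} [IsProbabilityMeasure μ]

theorem g_concave (hφ : 0 < φ) (hu : ContinuousOn u (Ici 0))
    (hcv : ConcaveOn ℝ (Ici 0) u) (hd : HasDerivWithinAt u d (Ici 0) 0) (hdφ : d ≤ φ)
    (hsupp : μ (Ioi 0) = 0) (hmom : Integrable (fun y : ℝ => |y|) μ)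
    {C : ℝ} (hC : ∀ t : ℝ, 0 ≤ t → |u t| ≤ C * (1 + t)) :
    ConcaveOn ℝ univ (fun x => ∫ y, G φ u (x + y) ∂μ) := by
  refine ⟨convex_univ, fun x _ z _ a b ha hb hab => ?_⟩
  have hGc := G_concave hφ hcv hd hdφ
  have hix := G_integrable hφ hu hsupp hmom hC x (μ := μ)
  have hiz := G_integrable hφ hu hsupp hmom hC z (μ := μ)
  have hixz := G_integrable hφ hu hsupp hmom hC (a • x + b • z) (μ := μ)
  have key : ∀ y : ℝ, a * G φ u (x + y) + b * G φ u (z + y) ≤ G φ u ((a • x + b • z) + y) := by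
    intro y
    have := hGc.2 (mem_univ (x + y)) (mem_univ (z + y)) ha hb hab
    simp only [smul_eq_mul] at this ⊢
    have harg : a * (x + y) + b * (z + y) = (a * x + b * z) + y := by
      linear_combination y * hab
    rwa [harg] at this
  calc a • (∫ y, G φ u (x + y) ∂μ) + b • (∫ y, G φ u (z + y) ∂μ)
      = ∫ y, (a * G φ u (x + y) + b * G φ u (z + y)) ∂μ := by
        rw [integral_add (hix.const_mul a) (hiz.const_mul b),
          integral_const_mul, integral_const_mul]; simp [smul_eq_mul]
    _ ≤ ∫ y, G φ u ((a • x + b • z) + y) ∂μ :=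
        integral_mono ((hix.const_mul a).add (hiz.const_mul b)) hixz key

theorem g_hasDeriv (hφ : 0 < φ) (hu : ContinuousOn u (Ici 0)) (hm : MonotoneOn u (Ici 0))
    (hcv : ConcaveOn ℝ (Ici 0) u) (hC1 : ContDiffOn ℝ 1 u (Ioi 0))
    (hd : HasDerivWithinAt u d (Ici 0) 0) (hdφ : d ≤ φ)
    (hsupp : μ (Ioi 0) = 0) (hmom : Integrable (fun y : ℝ => |y|) μ)
    {C : ℝ} (hC : ∀ t : ℝ, 0 ≤ t → |u t| ≤ C * (1 + t)) (x : ℝ) :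
    HasDerivWithinAt (fun x' => ∫ y, G φ u (x' + y) ∂μ)
      (∫ y, D φ u d (x + y) ∂μ) (Ici x) x := by
  rw [hasDerivWithinAt_iff_tendsto_slope, Set.Ici_sdiff_left]
  have key := tendsto_integral_filter_of_dominated_convergence (μ := μ)
    (l := nhdsWithin x (Ioi x))
    (F := fun t y => (G φ u (t + y) - G φ u (x + y)) / (t - x))
    (f := fun y => D φ u d (x + y)) (bound := fun _ => φ)
    (by
      filter_upwards with t
      exact ((((G_cont hu).comp (continuous_const.add continuous_id)).sub
        ((G_cont hu).comp (continuous_const.add continuous_id))).div_const _).aestronglyMeasurable)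
    (by
      filter_upwards [self_mem_nhdsWithin] with t ht
      filter_upwards with y
      have hlt : x + y < t + y := by exact add_lt_add_left ht y
      have heq : t - x = (t + y) - (x + y) := by ring
      rw [Real.norm_eq_abs, heq]
      have h := slope_G_mem hφ hm hcv hd hdφ hlt
      rw [abs_of_nonneg h.1]
      exact h.2)
    (integrable_const φ)
    (by
      filter_upwards with y
      have h1 := hasDerivWithinAt_iff_tendsto_slope.mp
        (hasDerivWithinAt_G hu hC1 hd (x + y) (φ := φ))
      rw [Set.Ici_sdiff_left] at h1
      have h2 : Tendsto (fun t : ℝ => t + y) (nhdsWithin x (Ioi x))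
          (nhdsWithin (x + y) (Ioi (x + y))) := by
        apply ContinuousWithinAt.tendsto_nhdsWithin
          (Continuous.continuousWithinAt (by continuity))
        intro t ht
        exact add_lt_add_left ht y
      refine (h1.comp h2).congr fun t => ?_
      simp only [Function.comp]
      rw [slope_def_field, add_sub_add_right_eq_sub])
  refine key.congr' ?_
  filter_upwards [self_mem_nhdsWithin] with t ht
  have htx : t - x ≠ 0 := by
    have : x < t := ht
    exact sub_ne_zero.mpr (ne_of_gt this)
  rw [slope_def_field, integral_div,
    integral_sub (G_integrable hφ hu hsupp hmom hC t) (G_integrable hφ hu hsupp hmom hC x)]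

theorem D_int_tendsto (hL : Tendsto (deriv u) atTop (nhds L))
    (hφ : 0 < φ) (hu : ContinuousOn u (Ici 0)) (hm : MonotoneOn u (Ici 0))
    (hcv : ConcaveOn ℝ (Ici 0) u) (hC1 : ContDiffOn ℝ 1 u (Ioi 0))
    (hd : HasDerivWithinAt u d (Ici 0) 0) (hdφ : d ≤ φ) :
    Tendsto (fun x => ∫ y, D φ u d (x + y) ∂μ) atTop (nhds L) := by
  have hLint : L = ∫ _ : ℝ, L ∂μ := by simp
  rw [hLint]
  apply tendsto_integral_filter_of_dominated_convergence (bound := fun _ => φ)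
  · filter_upwards with x
    exact ((D_meas (φ := φ) (u := u) (d := d)).comp
      (measurable_id.const_add x)).aestronglyMeasurable
  · filter_upwards with x
    filter_upwards with y
    have h := D_mem hφ hu hm hcv hC1 hd hdφ (x + y)
    rw [Real.norm_eq_abs, abs_of_nonneg h.1]
    exact h.2
  · exact integrable_const φ
  · filter_upwards with y
    have h2 : Tendsto (fun x : ℝ => x + y) atTop atTop := tendsto_atTop_add_const_right _ y tendsto_id
    refine (hL.comp h2).congr' ?_
    filter_upwards [eventually_ge_atTop (1 - y)] with x hx
    have hxy : 0 < x + y := by linarith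
    simp only [Function.comp, D]
    rw [if_neg (not_lt.mpr hxy.le), if_neg (ne_of_gt hxy)]

end Deriv
-- (finset sum concavity below)

theorem concaveOn_finsum' {ι : Type} {s : Finset ι} {S : Set ℝ} (hS : Convex ℝ S)
    {g : ι → ℝ → ℝ} (h : ∀ j ∈ s, ConcaveOn ℝ S (g j)) :
    ConcaveOn ℝ S (fun x => ∑ j ∈ s, g j x) := by
  classical
  induction s using Finset.induction_on with
  | empty => simpa using concaveOn_const (0:ℝ) hS
  | @insert a t ha ih =>
    have h1 := h a (Finset.mem_insert_self a t)
    have h2 := ih fun j hj => h j (Finset.mem_insert_of_mem hj)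
    have := h1.add h2
    simp only [Finset.sum_insert ha]; exact this

end FhatAux

/-- If `f ∈ 𝓑` is such that for every `j` the function `x ↦ f(x,j)` is concave on `[0,∞)`,
nondecreasing, continuously differentiable on `(0,∞)`, has right derivative at `0` at most `φ`,
and its derivative tends to a limit `L j ∈ [0,1]` as `x → ∞`, then for every `i` the function
`x ↦ f̂(x,i)` is concave on `[0,∞)`, has right derivative at `0` at most `φ`, and its right
derivative tends, as `x → ∞`, to a limit lying in `[0,1]`. -/
theorem fhat_payoff (I : Type) [Fintype I] [Nonempty I] [DecidableEq I]
    (φ : ℝ) (hφ : 1 < φ)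
    (lam : I → I → ℝ) (hlam : ∀ i j : I, i ≠ j → 0 ≤ lam i j)
    (hlampos : ∀ i : I, 0 < ∑ k ∈ Finset.univ.erase i, lam i k)
    (F : I → I → Measure ℝ)
    (hFprob : ∀ i j : I, i ≠ j → IsProbabilityMeasure (F i j))
    (hFsupp : ∀ i j : I, i ≠ j → F i j (Set.Ioi 0) = 0)
    (hFmom : ∀ i j : I, i ≠ j → Integrable (fun y : ℝ => |y|) (F i j))
    (f : ℝ × I → ℝ) (hf : memB I f)
    (hconc : ∀ j : I, ConcaveOn ℝ (Set.Ici 0) fun x : ℝ => f (x, j))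
    (hmono : ∀ j : I, MonotoneOn (fun x : ℝ => f (x, j)) (Set.Ici 0))
    (hC1 : ∀ j : I, ContDiffOn ℝ 1 (fun x : ℝ => f (x, j)) (Set.Ioi 0))
    (hd0 : ∀ j : I, ∃ d : ℝ, d ≤ φ ∧
      HasDerivWithinAt (fun x : ℝ => f (x, j)) d (Set.Ici 0) 0)
    (L : I → ℝ) (hLmem : ∀ j : I, L j ∈ Set.Icc (0 : ℝ) 1)
    (hLlim : ∀ j : I,
      Tendsto (fun x : ℝ => deriv (fun t : ℝ => f (t, j)) x) atTop (nhds (L j))) :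
    ∀ i : I,
      ConcaveOn ℝ (Set.Ici 0) (fun x : ℝ => fhat I φ lam F f x i) ∧
      (∃ d : ℝ, d ≤ φ ∧
        HasDerivWithinAt (fun x : ℝ => fhat I φ lam F f x i) d (Set.Ici 0) 0) ∧
      (∃ M : ℝ, M ∈ Set.Icc (0 : ℝ) 1 ∧
        (∀ x : ℝ, 0 < x →
          DifferentiableWithinAt ℝ (fun t : ℝ => fhat I φ lam F f t i) (Set.Ici x) x) ∧
        Tendsto (fun x : ℝ => derivWithin (fun t : ℝ => fhat I φ lam F f t i) (Set.Ici x) x)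
          atTop (nhds M)) := by
  classical
  intro i
  obtain ⟨hfc, ⟨C, hCub⟩⟩ := hf
  have hφ0 : (0:ℝ) < φ := lt_trans one_pos hφ
  have hC : ∀ (j : I) (t : ℝ), 0 ≤ t → |f (t, j)| ≤ C * (1 + t) := by
    intro j t ht
    have h1 : |f (t, j)| / (1 + t) ≤ C := hCub ⟨(t, j), ⟨ht, trivial⟩, rfl⟩
    have h2 : (0:ℝ) < 1 + t := by linarith
    calc |f (t,j)| = |f (t,j)| / (1+t) * (1+t) := by field_simp
    _ ≤ C * (1+t) := mul_le_mul_of_nonneg_right h1 h2.le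
  have hΛpos : 0 < ∑ k ∈ Finset.univ.erase i, lam i k := hlampos i
  have hne : ∀ j ∈ Finset.univ.erase i, i ≠ j :=
    fun j hj => ((Finset.mem_erase.mp hj).1).symm
  have hcnn : ∀ j ∈ Finset.univ.erase i,
      0 ≤ lam i j / ∑ k ∈ Finset.univ.erase i, lam i k :=
    fun j hj => div_nonneg (hlam i j (hne j hj)) hΛpos.le
  have hcsum : ∑ j ∈ Finset.univ.erase i,
      lam i j / ∑ k ∈ Finset.univ.erase i, lam i k = 1 := by
    rw [← Finset.sum_div]; exact div_self (ne_of_gt hΛpos)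
  choose dd hddφ hdd using hd0
  -- rewrite fhat through the extension G
  have hrw : (fun x : ℝ => fhat I φ lam F f x i) = fun x : ℝ =>
      ∑ j ∈ Finset.univ.erase i,
        (lam i j / ∑ k ∈ Finset.univ.erase i, lam i k) *
          ∫ y : ℝ, FhatAux.G φ (fun t => f (t, j)) (x + y) ∂(F i j) := by
    funext x
    unfold fhat
    refine Finset.sum_congr rfl fun j hj => ?_
    have : (∫ y : ℝ, (if -y ≤ x then f (x + y, j) else φ * (x + y) + f (0, j)) ∂(F i j))
        = ∫ y : ℝ, FhatAux.G φ (fun t => f (t, j)) (x + y) ∂(F i j) := by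
      refine integral_congr_ae (Filter.Eventually.of_forall fun y => ?_)
      have hiff : (-y ≤ x) ↔ (0 ≤ x + y) := by constructor <;> intro <;> linarith
      simp only [FhatAux.G]
      exact if_congr hiff rfl rfl
    rw [this]
  -- the uniform one-sided derivative
  have hDer : ∀ x : ℝ, HasDerivWithinAt (fun x' : ℝ => fhat I φ lam F f x' i)
      (∑ j ∈ Finset.univ.erase i,
        (lam i j / ∑ k ∈ Finset.univ.erase i, lam i k) *
          ∫ y : ℝ, FhatAux.D φ (fun t => f (t, j)) (dd j) (x + y) ∂(F i j)) (Set.Ici x) x := by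
    intro x
    rw [hrw]
    apply HasDerivWithinAt.fun_sum
    intro j hj
    haveI := hFprob i j (hne j hj)
    exact (FhatAux.g_hasDeriv hφ0 (hfc j) (hmono j) (hconc j) (hC1 j) (hdd j) (hddφ j)
      (hFsupp i j (hne j hj)) (hFmom i j (hne j hj)) (hC j) x).const_mul _
  have hDbound : ∀ (x : ℝ), ∀ j ∈ Finset.univ.erase i,
      (∫ y : ℝ, FhatAux.D φ (fun t => f (t, j)) (dd j) (x + y) ∂(F i j)) ≤ φ := by
    intro x j hj
    haveI := hFprob i j (hne j hj)
    calc (∫ y : ℝ, FhatAux.D φ (fun t => f (t, j)) (dd j) (x + y) ∂(F i j))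
        ≤ ∫ _ : ℝ, φ ∂(F i j) := by
          refine integral_mono (FhatAux.D_integrable hφ0 (hfc j) (hmono j) (hconc j)
            (hC1 j) (hdd j) (hddφ j) x) (integrable_const φ) fun y => ?_
          exact (FhatAux.D_mem hφ0 (hfc j) (hmono j) (hconc j) (hC1 j) (hdd j) (hddφ j)
            (x + y)).2
      _ = φ := by simp
  refine ⟨?_, ⟨_, ?_, hDer 0⟩, ?_⟩
  · -- concavity
    rw [hrw]
    refine FhatAux.concaveOn_finsum' (convex_Ici 0) fun j hj => ?_
    haveI := hFprob i j (hne j hj)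
    have hg := (FhatAux.g_concave hφ0 (hfc j) (hconc j) (hdd j) (hddφ j)
      (hFsupp i j (hne j hj)) (hFmom i j (hne j hj)) (hC j)).subset
      (Set.subset_univ _) (convex_Ici 0)
    simpa [smul_eq_mul] using hg.smul (hcnn j hj)
  · -- right derivative at 0 is at most φ
    calc (∑ j ∈ Finset.univ.erase i,
          (lam i j / ∑ k ∈ Finset.univ.erase i, lam i k) *
            ∫ y : ℝ, FhatAux.D φ (fun t => f (t, j)) (dd j) ((0:ℝ) + y) ∂(F i j))
        ≤ ∑ j ∈ Finset.univ.erase i,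
            (lam i j / ∑ k ∈ Finset.univ.erase i, lam i k) * φ :=
          Finset.sum_le_sum fun j hj =>
            mul_le_mul_of_nonneg_left (hDbound 0 j hj) (hcnn j hj)
      _ = φ := by rw [← Finset.sum_mul, hcsum, one_mul]
  · -- limit of right derivatives at infinity
    refine ⟨∑ j ∈ Finset.univ.erase i,
      (lam i j / ∑ k ∈ Finset.univ.erase i, lam i k) * L j, ⟨?_, ?_⟩, ?_, ?_⟩
    · exact Finset.sum_nonneg fun j hj => mul_nonneg (hcnn j hj) (hLmem j).1
    · calc (∑ j ∈ Finset.univ.erase i,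
            (lam i j / ∑ k ∈ Finset.univ.erase i, lam i k) * L j)
          ≤ ∑ j ∈ Finset.univ.erase i,
              (lam i j / ∑ k ∈ Finset.univ.erase i, lam i k) * 1 :=
            Finset.sum_le_sum fun j hj =>
              mul_le_mul_of_nonneg_left (hLmem j).2 (hcnn j hj)
        _ = 1 := by rw [← Finset.sum_mul, hcsum, one_mul]
    · exact fun x _ => (hDer x).differentiableWithinAt
    · have heq : ∀ x : ℝ, derivWithin (fun t : ℝ => fhat I φ lam F f t i) (Set.Ici x) x
          = ∑ j ∈ Finset.univ.erase i,
            (lam i j / ∑ k ∈ Finset.univ.erase i, lam i k) *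
              ∫ y : ℝ, FhatAux.D φ (fun t => f (t, j)) (dd j) (x + y) ∂(F i j) :=
        fun x => (hDer x).derivWithin (uniqueDiffOn_Ici x x Set.self_mem_Ici)
    
      have hT : Tendsto (fun x : ℝ => ∑ j ∈ Finset.univ.erase i,
          (lam i j / ∑ k ∈ Finset.univ.erase i, lam i k) *
            ∫ y : ℝ, FhatAux.D φ (fun t => f (t, j)) (dd j) (x + y) ∂(F i j)) atTop
          (nhds (∑ j ∈ Finset.univ.erase i,
            (lam i j / ∑ k ∈ Finset.univ.erase i, lam i k) * L j)) := by
        refine tendsto_finset_sum _ fun j hj => ?_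
        haveI := hFprob i j (hne j hj)
        exact (FhatAux.D_int_tendsto (hLlim j) hφ0 (hfc j) (hmono j) (hconc j) (hC1 j)
          (hdd j) (hddφ j)).const_mul _
      exact hT.congr fun x => (heq x).symm
end
end

section
/- Let μ be a Borel probability measure on ℝ and let F : ℝ → ℝ be concave with ∫ |F(x+y)| μ(dy) < ∞ for every x ∈ ℝ, and suppose there is φ ∈ ℝ such that F(z') − F(z) ≤ φ·(z'−z) whenever z ≤ z'. Then the function g(x) := ∫ F(x+y) μ(dy) has a finite right derivative at every x ∈ ℝ, given by g'_+(x) = ∫ F'_+(x+y) μ(dy), where F'_+ denotes the (everywhere finite) right derivative of the concave function F; in particular g'_+(x) ≤ φ for every x. -/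
open MeasureTheory

open Set Filter Topology in
private lemma concave_aux (F : ℝ → ℝ) (hF : ConcaveOn ℝ Set.univ F)
    (φ : ℝ) (hφ : ∀ z z' : ℝ, z ≤ z' → F z' - F z ≤ φ * (z' - z)) :
    ∃ rd : ℝ → ℝ,
      (∀ z, HasDerivWithinAt F (rd z) (Ici z) z) ∧
      (∀ z, rd z ≤ φ) ∧ (∀ z, F (z + 1) - F z ≤ rd z) ∧ Antitone rd ∧
      (∀ z w, z < w → (F w - F z) / (w - z) ≤ rd z) ∧
      (∀ z w, z < w → w ≤ z + 1 → F (z + 1) - F z ≤ (F w - F z) / (w - z)) := by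
  have hanti : ∀ z : ℝ, AntitoneOn (slope F z) (Ioi z) := by
    intro z w1 h1 w2 h2 h12
    rcases eq_or_lt_of_le h12 with rfl | h12; · exact le_rfl
    simp only [slope_def_field]
    have key := hF.neg.secant_mono (Set.mem_univ z) (Set.mem_univ w1) (Set.mem_univ w2)
      (ne_of_gt h1) (ne_of_gt h2) h12.le
    simp only [Pi.neg_apply] at key
    have d1 : (0:ℝ) < w1 - z := by simpa using h1
    have d2 : (0:ℝ) < w2 - z := by simpa using h2
    rw [div_le_div_iff₀ d1 d2] at key
    rw [div_le_div_iff₀ d2 d1]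
    nlinarith
  have hbdd : ∀ z : ℝ, ∀ w ∈ Ioi z, slope F z w ≤ φ := by
    intro z w hw
    rw [slope_def_field, div_le_iff₀ (by simpa using hw)]
    exact hφ z w (le_of_lt hw)
  refine ⟨fun z => sSup (slope F z '' Ioi z), ?_, ?_, ?_, ?_, ?_, ?_⟩
  · intro z
    rw [hasDerivWithinAt_iff_tendsto_slope, Set.Ici_sdiff_left]
    exact (hanti z).tendsto_nhdsGT
      ⟨φ, by rintro _ ⟨w, hw, rfl⟩; exact hbdd z w hw⟩
  · intro z
    apply csSup_le ⟨_, Set.mem_image_of_mem _ (by simp : z + 1 ∈ Ioi z)⟩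
    rintro _ ⟨w, hw, rfl⟩; exact hbdd z w hw
  · intro z
    have : slope F z (z + 1) = F (z + 1) - F z := by
      rw [slope_def_field]; simp
    rw [← this]
    exact le_csSup ⟨φ, by rintro _ ⟨w, hw, rfl⟩; exact hbdd z w hw⟩
      (Set.mem_image_of_mem _ (by simp : z + 1 ∈ Ioi z))
  · intro z1 z2 h
    rcases eq_or_lt_of_le h with rfl | h; · exact le_rfl
    have step1 : sSup (slope F z2 '' Ioi z2) ≤ slope F z1 z2 := by
      apply csSup_le ⟨_, Set.mem_image_of_mem _ (by simp : z2 + 1 ∈ Ioi z2)⟩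
      rintro _ ⟨w, hw, rfl⟩
      simpa [slope_def_field] using
        hF.slope_anti_adjacent (Set.mem_univ z1) (Set.mem_univ w) h hw
    refine step1.trans (le_csSup ⟨φ, ?_⟩ (Set.mem_image_of_mem _ h))
    rintro _ ⟨w, hw, rfl⟩; exact hbdd z1 w hw
  · intro z w hzw
    rw [← slope_def_field]
    exact le_csSup ⟨φ, by rintro _ ⟨w, hw, rfl⟩; exact hbdd z w hw⟩
      (Set.mem_image_of_mem _ hzw)
  · intro z w hzw hw1
    have := hanti z (Set.mem_Ioi.mpr hzw) (Set.mem_Ioi.mpr (by linarith : z < z + 1)) hw1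
    simpa [slope_def_field] using this

open Set Filter Topology in
/-- Let `μ` be a Borel probability measure on `ℝ` and `F : ℝ → ℝ` concave with
`y ↦ F (x + y)` `μ`-integrable for every `x`, and suppose `F z' − F z ≤ φ·(z' − z)` for
`z ≤ z'`.  Then `g(x) := ∫ F (x + y) μ(dy)` has a finite right derivative at every `x`, given
by `g'_+(x) = ∫ F'_+(x + y) μ(dy)` (with `F'_+` the right derivative of `F`, formalized as
`derivWithin F (Ici z) z`); in particular `g'_+(x) ≤ φ` for every `x`. -/
theorem right_deriv_of_integral_concave (μ : Measure ℝ) [IsProbabilityMeasure μ]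
    (F : ℝ → ℝ) (hF : ConcaveOn ℝ Set.univ F)
    (hint : ∀ x : ℝ, Integrable (fun y : ℝ => F (x + y)) μ)
    (φ : ℝ) (hφ : ∀ z z' : ℝ, z ≤ z' → F z' - F z ≤ φ * (z' - z)) :
    ∀ x : ℝ,
      Integrable (fun y : ℝ => derivWithin F (Set.Ici (x + y)) (x + y)) μ ∧
      HasDerivWithinAt (fun x : ℝ => ∫ y : ℝ, F (x + y) ∂μ)
        (∫ y : ℝ, derivWithin F (Set.Ici (x + y)) (x + y) ∂μ) (Set.Ici x) x ∧
      (∫ y : ℝ, derivWithin F (Set.Ici (x + y)) (x + y) ∂μ) ≤ φ := by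
  obtain ⟨rd, hder, hle, hge, hanti, hslope_le, hslope_ge⟩ := concave_aux F hF φ hφ
  have hrdeq : ∀ z : ℝ, derivWithin F (Set.Ici z) z = rd z := fun z =>
    (hder z).derivWithin (uniqueDiffOn_Ici z z Set.self_mem_Ici)
  intro x
  have habs : ∀ y : ℝ, |rd (x + y)| ≤ |φ| + |F (x + 1 + y)| + |F (x + y)| := by
    intro y
    have h1 := hle (x + y)
    have h2 := hge (x + y)
    have e : x + y + 1 = x + 1 + y := by ring
    rw [e] at h2
    rw [abs_le]
    constructor
    · have := neg_abs_le (F (x + 1 + y)); have := neg_abs_le (F (x + y))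
      have := le_abs_self (F (x + y)); nlinarith [abs_nonneg φ, neg_abs_le (F (x+1+y)),
        le_abs_self (F (x+y)), abs_nonneg (F (x+1+y)), abs_nonneg (F (x+y))]
    · nlinarith [le_abs_self φ, abs_nonneg (F (x+1+y)), abs_nonneg (F (x+y))]
  have hbound_int : Integrable (fun y => |φ| + |F (x + 1 + y)| + |F (x + y)|) μ :=
    (((integrable_const |φ|).add (hint (x+1)).abs).add (hint x).abs)
  have hint_rd : Integrable (fun y : ℝ => rd (x + y)) μ := by
    refine hbound_int.mono' ?_ (Filter.Eventually.of_forall fun y => ?_)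
    · exact ((hanti.measurable).comp (measurable_const_add x)).aestronglyMeasurable
    · simpa using habs y
  have key : Tendsto (fun z : ℝ => ∫ y, (F (z + y) - F (x + y)) / (z - x) ∂μ)
      (𝓝[>] x) (𝓝 (∫ y, rd (x + y) ∂μ)) := by
    apply tendsto_integral_filter_of_dominated_convergence
      (fun y => |φ| + |F (x + 1 + y)| + |F (x + y)|)
    · exact Filter.Eventually.of_forall fun z =>
        (((hint z).sub (hint x)).div_const _).aestronglyMeasurable
    · filter_upwards [Ioc_mem_nhdsGT (by linarith : x < x + 1)] with z hz
      refine Filter.Eventually.of_forall fun y => ?_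
      have hzx : (0:ℝ) < z - x := by simpa using hz.1
      have hup : (F (z + y) - F (x + y)) / (z - x) ≤ φ := by
        rw [div_le_iff₀ hzx]
        have := hφ (x + y) (z + y) (by linarith [hz.1.le])
        calc F (z + y) - F (x + y) ≤ φ * ((z+y) - (x+y)) := this
          _ = φ * (z - x) := by ring
      have hlow : F (x + 1 + y) - F (x + y) ≤ (F (z + y) - F (x + y)) / (z - x) := by
        have h1 := hslope_ge (x + y) (z + y) (by linarith [hz.1]) (by linarith [hz.2])
        have e1 : x + y + 1 = x + 1 + y := by ring
        have e2 : z + y - (x + y) = z - x := by ring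
        rwa [e1, e2] at h1
      rw [Real.norm_eq_abs, abs_le]
      constructor
      · nlinarith [le_abs_self φ, abs_nonneg φ, neg_abs_le (F (x+1+y)), le_abs_self (F (x+y)),
          abs_nonneg (F (x+1+y)), abs_nonneg (F (x+y))]
      · nlinarith [le_abs_self φ, abs_nonneg (F (x+1+y)), abs_nonneg (F (x+y))]
    · exact hbound_int
    · refine Filter.Eventually.of_forall fun y => ?_
      have hmap : Tendsto (fun z : ℝ => z + y) (𝓝[>] x) (𝓝[>] (x + y)) := by
        apply tendsto_nhdsWithin_of_tendsto_nhds_of_eventually_within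
        · exact ((continuous_id.add continuous_const).tendsto x).mono_left nhdsWithin_le_nhds
        · filter_upwards [self_mem_nhdsWithin] with z hz
          exact (by linarith [Set.mem_Ioi.mp hz] : x + y < z + y)
      have hts : Tendsto (slope F (x + y)) (𝓝[>] (x + y)) (𝓝 (rd (x + y))) := by
        have := hder (x + y)
        rw [hasDerivWithinAt_iff_tendsto_slope, Set.Ici_sdiff_left] at this
        exact this
      have := hts.comp hmap
      refine this.congr fun z => ?_
      simp only [Function.comp_apply, slope_def_field]
      congr 1; ring
  refine ⟨by simpa only [hrdeq] using hint_rd, ?_, ?_⟩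
  · simp only [hrdeq]
    rw [hasDerivWithinAt_iff_tendsto_slope, Set.Ici_sdiff_left]
    refine key.congr' ?_
    filter_upwards [self_mem_nhdsWithin] with z hz
    have hzx : z - x ≠ 0 := by have := (Set.mem_Ioi.mp hz); intro h; linarith [sub_eq_zero.mp h]
    rw [slope_def_field, ← integral_sub (hint z) (hint x), ← integral_div]
  · simp only [hrdeq]
    calc (∫ y, rd (x + y) ∂μ) ≤ ∫ _, φ ∂μ :=
          integral_mono hint_rd (integrable_const φ) fun y => hle (x + y)
      _ = φ := by simp
end

section
/- Let μ be a Borel probability measure on ℝ and let F : ℝ → ℝ be concave with ∫ |F(x+y)| μ(dy) < ∞ for every x ∈ ℝ, with right derivative F'_+ bounded above by some φ ∈ ℝ, and suppose F'_+(z) → L ∈ ℝ as z → ∞. Then the right derivative of g(x) := ∫ F(x+y) μ(dy) satisfies g'_+(x) → L as x → ∞. -/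
open MeasureTheory Filter

/-- Let `μ` be a Borel probability measure on `ℝ` and `F : ℝ → ℝ` concave with
`y ↦ F (x + y)` `μ`-integrable for every `x`, with right derivative `F'_+` (which exists
everywhere for a concave function) bounded above by some `φ`, and suppose `F'_+(z) → L` as
`z → ∞`.  Then the right derivative of `g(x) := ∫ F (x + y) μ(dy)` satisfies `g'_+(x) → L`
as `x → ∞`.  Right derivatives are formalized via `derivWithin · (Ici z) z`. -/
theorem right_deriv_of_integral_tendsto (μ : Measure ℝ) [IsProbabilityMeasure μ]
    (F : ℝ → ℝ) (hF : ConcaveOn ℝ Set.univ F)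
    (hint : ∀ x : ℝ, Integrable (fun y : ℝ => F (x + y)) μ)
    (hFdiff : ∀ z : ℝ, DifferentiableWithinAt ℝ F (Set.Ici z) z)
    (φ : ℝ) (hφ : ∀ z : ℝ, derivWithin F (Set.Ici z) z ≤ φ)
    (L : ℝ)
    (hL : Tendsto (fun z : ℝ => derivWithin F (Set.Ici z) z) atTop (nhds L)) :
    (∀ x : ℝ,
      DifferentiableWithinAt ℝ (fun x : ℝ => ∫ y : ℝ, F (x + y) ∂μ) (Set.Ici x) x) ∧
    Tendsto (fun x : ℝ => derivWithin (fun x : ℝ => ∫ y : ℝ, F (x + y) ∂μ) (Set.Ici x) x)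
      atTop (nhds L) := by
  set f : ℝ → ℝ := fun z => derivWithin F (Set.Ici z) z with hf_def
  have hFcont : Continuous F := by
    rw [← continuousOn_univ]
    exact hF.continuousOn isOpen_univ
  have hF' : ∀ z : ℝ, HasDerivWithinAt F (f z) (Set.Ici z) z := fun z =>
    (hFdiff z).hasDerivWithinAt
  have hslope_le : ∀ z t : ℝ, z < t → slope F z t ≤ f z := fun z t hzt =>
    hF.slope_le_of_hasDerivWithinAt_Ioi (Set.mem_univ z) (Set.mem_univ t) hzt
      ((hF' z).mono Set.Ioi_subset_Ici_self)
  have hle_slope : ∀ z t : ℝ, z < t → f t ≤ slope F z t := by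
    intro z t hzt
    have htend : Tendsto (slope F t) (nhdsWithin t (Set.Ioi t)) (nhds (f t)) := by
      have h := hasDerivWithinAt_iff_tendsto_slope.1 (hF' t)
      rwa [Set.Ici_sdiff_left] at h
    refine le_of_tendsto htend ?_
    filter_upwards [self_mem_nhdsWithin] with s (hs : t < s)
    have h := hF.slope_anti_adjacent (Set.mem_univ z) (Set.mem_univ s) hzt hs
    rw [slope_def_field, slope_def_field]
    exact h
  have hanti : Antitone f := by
    intro a b hab
    rcases eq_or_lt_of_le hab with rfl | h
    · exact le_refl _
    · exact (hle_slope a b h).trans (hslope_le a b h)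
  have hLle : ∀ z, L ≤ f z := by
    intro z
    refine le_of_tendsto hL ?_
    filter_upwards [eventually_ge_atTop z] with w hw
    exact hanti hw
  have hfmeas : Measurable f := hanti.measurable
  set C : ℝ := max |L| |φ| with hC_def
  have habs : ∀ z, |f z| ≤ C := by
    intro z
    have h1 := hLle z
    have h2 := hφ z
    have h3 := neg_abs_le L
    have h4 := le_abs_self φ
    have h5 := le_max_left |L| |φ|
    have h6 := le_max_right |L| |φ|
    rw [abs_le]
    constructor <;> [linarith; exact (h2.trans h4).trans h6]
  have key : ∀ x : ℝ, HasDerivWithinAt (fun x : ℝ => ∫ y : ℝ, F (x + y) ∂μ)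
      (∫ y : ℝ, f (x + y) ∂μ) (Set.Ici x) x := by
    intro x
    rw [hasDerivWithinAt_iff_tendsto_slope, Set.Ici_sdiff_left]
    have hmain : Tendsto (fun t : ℝ => ∫ y : ℝ, slope F (x + y) (t + y) ∂μ)
        (nhdsWithin x (Set.Ioi x)) (nhds (∫ y : ℝ, f (x + y) ∂μ)) := by
      apply tendsto_integral_filter_of_dominated_convergence (fun _ => C)
      · filter_upwards [self_mem_nhdsWithin] with t (ht : x < t)
        have heq : (fun y => slope F (x + y) (t + y))
            = fun y => (F (t + y) - F (x + y)) / (t - x) := by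
          funext y; rw [slope_def_field, add_sub_add_right_eq_sub]
        rw [heq]
        exact (((hFcont.comp (continuous_const.add continuous_id)).sub
          (hFcont.comp (continuous_const.add continuous_id))).div_const _).aestronglyMeasurable
      · filter_upwards [self_mem_nhdsWithin] with t (ht : x < t)
        refine Eventually.of_forall fun y => ?_
        have hlt : x + y < t + y := add_lt_add_left ht y
        have h1 : slope F (x + y) (t + y) ≤ f (x + y) := hslope_le _ _ hlt
        have h2 : f (t + y) ≤ slope F (x + y) (t + y) := hle_slope _ _ hlt
        have h3 := hLle (t + y)
        have h4 := hφ (x + y)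
        have h5 := neg_abs_le L
        have h6 := le_abs_self φ
        have h7 := le_max_left |L| |φ|
        have h8 := le_max_right |L| |φ|
        rw [Real.norm_eq_abs, abs_le]
        constructor <;> linarith
      · exact integrable_const C
      · refine Eventually.of_forall fun y => ?_
        have h := hasDerivWithinAt_iff_tendsto_slope.1 (hF' (x + y))
        rw [Set.Ici_sdiff_left] at h
        have hmap : Tendsto (fun t : ℝ => t + y)
            (nhdsWithin x (Set.Ioi x)) (nhdsWithin (x + y) (Set.Ioi (x + y))) := by
          refine tendsto_nhdsWithin_of_tendsto_nhds_of_eventually_within _ ?_ ?_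
          · exact ((continuous_add_right y).tendsto x).mono_left nhdsWithin_le_nhds
          · filter_upwards [self_mem_nhdsWithin] with t (ht : x < t)
            exact add_lt_add_left ht y
        exact h.comp hmap
    refine hmain.congr' ?_
    filter_upwards [self_mem_nhdsWithin] with t (ht : x < t)
    have hne : t - x ≠ 0 := sub_ne_zero.2 (ne_of_gt ht)
    calc ∫ y : ℝ, slope F (x + y) (t + y) ∂μ
        = ∫ y : ℝ, (F (t + y) - F (x + y)) / (t - x) ∂μ := by
          congr 1; funext y; rw [slope_def_field, add_sub_add_right_eq_sub]
      _ = (∫ y : ℝ, (F (t + y) - F (x + y)) ∂μ) / (t - x) := integral_div _ _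
      _ = ((∫ y : ℝ, F (t + y) ∂μ) - ∫ y : ℝ, F (x + y) ∂μ) / (t - x) := by
          rw [integral_sub (hint t) (hint x)]
      _ = slope (fun x : ℝ => ∫ y : ℝ, F (x + y) ∂μ) x t := by
          rw [slope_def_field]
  have hgderiv : ∀ x : ℝ, derivWithin (fun x : ℝ => ∫ y : ℝ, F (x + y) ∂μ) (Set.Ici x) x
      = ∫ y : ℝ, f (x + y) ∂μ :=
    fun x => (key x).derivWithin (uniqueDiffOn_Ici x x Set.self_mem_Ici)
  refine ⟨fun x => (key x).differentiableWithinAt, ?_⟩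
  have hD : Tendsto (fun x : ℝ => ∫ y : ℝ, f (x + y) ∂μ) atTop (nhds L) := by
    have hLint : (L : ℝ) = ∫ _y : ℝ, L ∂μ := by simp
    rw [hLint]
    apply tendsto_integral_filter_of_dominated_convergence (fun _ => C)
    · exact Eventually.of_forall fun x =>
        (hfmeas.comp (measurable_const.add measurable_id)).aestronglyMeasurable
    · exact Eventually.of_forall fun x => Eventually.of_forall fun y => by
        rw [Real.norm_eq_abs]; exact habs _
    · exact integrable_const C
    · exact Eventually.of_forall fun y =>
        hL.comp (tendsto_atTop_add_const_right atTop y tendsto_id)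
  simpa only [hgderiv] using hD
end

section
/- Let p, q ∈ ℝ and let W_p, W_q : ℝ → ℝ be Borel measurable functions that vanish on (−∞,0), are continuous on [0,∞), and satisfy the resolvent identity W_q(u) = W_p(u) + (q − p) ∫_0^u W_p(u−z) W_q(z) dz for every u ≥ 0. Then for every x ≥ 0 and every y ∈ ℝ with x + y ≥ 0, one has W_q(x+y) − (q − p) ∫_0^x W_q(z+y) W_p(x−z) dz = W_p(x+y) + (q − p) ∫_0^y W_p(x+y−z) W_q(z) dz, where for y < 0 the last integral is the (signed) interval integral from 0 to y, which vanishes since W_q is zero on (−∞,0). -/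
/-- Let `p, q ∈ ℝ` and `W_p, W_q : ℝ → ℝ` be Borel measurable functions vanishing on
`(−∞,0)`, continuous on `[0,∞)`, and satisfying the resolvent identity
`W_q(u) = W_p(u) + (q − p) ∫_0^u W_p(u − z) W_q(z) dz` for every `u ≥ 0`.  Then for every
`x ≥ 0` and `y ∈ ℝ` with `x + y ≥ 0`,
`W_q(x+y) − (q − p) ∫_0^x W_q(z+y) W_p(x−z) dz
  = W_p(x+y) + (q − p) ∫_0^y W_p(x+y−z) W_q(z) dz`,
where `∫_0^y` is the signed interval integral (which vanishes for `y < 0` since `W_q` is zero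
on `(−∞,0)`). -/
theorem scale_function_identity (p q : ℝ) (Wp Wq : ℝ → ℝ)
    (hWpm : Measurable Wp) (hWqm : Measurable Wq)
    (hWp0 : ∀ u : ℝ, u < 0 → Wp u = 0) (hWq0 : ∀ u : ℝ, u < 0 → Wq u = 0)
    (hWpc : ContinuousOn Wp (Set.Ici 0)) (hWqc : ContinuousOn Wq (Set.Ici 0))
    (hres : ∀ u : ℝ, 0 ≤ u →
      Wq u = Wp u + (q - p) * ∫ z in (0:ℝ)..u, Wp (u - z) * Wq z) :
    ∀ x : ℝ, 0 ≤ x → ∀ y : ℝ, 0 ≤ x + y →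
      Wq (x + y) - (q - p) * ∫ z in (0:ℝ)..x, Wq (z + y) * Wp (x - z) =
      Wp (x + y) + (q - p) * ∫ z in (0:ℝ)..y, Wp (x + y - z) * Wq z := by
  intro x hx y hxy
  set g : ℝ → ℝ := fun z => Wp (x + y - z) * Wq z with hg
  have hgc : ContinuousOn g (Set.Icc 0 (x + y)) := by
    apply ContinuousOn.mul
    · refine hWpc.comp (continuous_const.sub continuous_id).continuousOn ?_
      intro z hz
      simp only [Set.mem_Ici, id_eq]
      linarith [hz.2]
    · exact hWqc.mono (fun z hz => hz.1)
  have hint : IntervalIntegrable g MeasureTheory.volume 0 (x + y) := by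
    apply ContinuousOn.intervalIntegrable
    rwa [Set.uIcc_of_le hxy]
  have hzero : ∀ y' : ℝ, y' ≤ 0 → IntervalIntegrable g MeasureTheory.volume y' 0 := by
    intro y' hy'
    rw [intervalIntegrable_iff]
    refine (MeasureTheory.integrable_zero _ _ _).congr ?_
    have h1 : ∀ᵐ z ∂(MeasureTheory.volume.restrict (Set.uIoc y' 0)), z ≠ (0:ℝ) :=
      MeasureTheory.ae_restrict_of_ae (by
        refine MeasureTheory.ae_iff.mpr ?_
        simpa using MeasureTheory.measure_mono_null (by intro z hz; simpa using hz)
          (MeasureTheory.measure_singleton (0:ℝ)))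
    filter_upwards [h1, MeasureTheory.ae_restrict_mem measurableSet_uIoc] with z hz1 hz2
    rw [Set.uIoc_of_le hy'] at hz2
    have hzlt : z < 0 := lt_of_le_of_ne hz2.2 hz1
    simp [hg, hWq0 z hzlt]
  have hint1 : IntervalIntegrable g MeasureTheory.volume 0 y := by
    rcases le_or_gt 0 y with hy | hy
    · refine hint.mono_set ?_
      rw [Set.uIcc_of_le hy, Set.uIcc_of_le hxy]
      exact Set.Icc_subset_Icc le_rfl (by linarith)
    · exact (hzero y hy.le).symm
  have hint2 : IntervalIntegrable g MeasureTheory.volume y (x + y) := by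
    rcases le_or_gt 0 y with hy | hy
    · refine hint.mono_set ?_
      rw [Set.uIcc_of_le (by linarith : y ≤ x + y), Set.uIcc_of_le hxy]
      exact Set.Icc_subset_Icc hy le_rfl
    · exact (hzero y hy.le).trans hint
  have hsplit : (∫ z in (0:ℝ)..y, g z) + ∫ z in y..(x + y), g z = ∫ z in (0:ℝ)..(x + y), g z :=
    intervalIntegral.integral_add_adjacent_intervals hint1 hint2
  have hcov : (∫ z in (0:ℝ)..x, Wq (z + y) * Wp (x - z)) = ∫ z in y..(x + y), g z := by
    have := intervalIntegral.integral_comp_add_right (a := (0:ℝ)) (b := x) g y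
    rw [zero_add] at this
    rw [← this]
    congr 1
    ext z
    simp only [hg]
    ring_nf
  have hR := hres (x + y) hxy
  rw [hcov, hR]
  simp only [← hg]
  ring_nf
  rw [← hsplit]
  ring
end
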